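/- Let T and U be trees, each with n vertices, such that N_λ(T) = N_λ(U) for every partition λ of n (equivalently, X_T = X_U). Then T and U have the same degree sequence: for every j ≥ 0, the number of vertices of T of degree j equals the number of vertices of U of degree j. -/

import Mathlib

open SimpleGraph Finset

variable {V : Type*} {W : Type*}

open Classical in
/-- `edgeSetType A` : the "type" of the edge set `A`, i.e. the partition (as a multiset of
positive integers) of `#V` whose parts are the orders of the connected components of the
spanning subgraph `(V, A)`. -/
noncomputable def edgeSetType [Fintype V] (A : Finset (Sym2 V)) : Multiset ℕ :=
  ((Finset.univ : Finset V).image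
    (fun v => (SimpleGraph.fromEdgeSet (↑A : Set (Sym2 V))).connectedComponentMk v)).val.map
    (fun c => c.supp.ncard)

open Classical in
/-- `cCoeff G λ = Σ_{A ⊆ E(G), type(A) = λ} (−1)^{#A}`, the coefficient of the power-sum
symmetric function `p_λ` in the chromatic symmetric function `X_G`. -/
noncomputable def cCoeff [Fintype V] (G : SimpleGraph V) (lam : Multiset ℕ) : ℤ :=
  ∑ A ∈ (Finset.univ : Finset (Sym2 V)).powerset,
    if (↑A : Set (Sym2 V)) ⊆ G.edgeSet ∧ edgeSetType A = lam then (-1 : ℤ) ^ A.card else 0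

open Classical in
/-- `NCoeff G λ` : the number of edge sets `A ⊆ E(G)` with `type(A) = λ`. -/
noncomputable def NCoeff [Fintype V] (G : SimpleGraph V) (lam : Multiset ℕ) : ℕ :=
  ((Finset.univ : Finset (Sym2 V)).powerset.filter
    (fun (A : Finset (Sym2 V)) => (↑A : Set (Sym2 V)) ⊆ G.edgeSet ∧ edgeSetType A = lam)).card

/-! ### Auxiliary lemmas -/

open Classical in
lemma supp_ncard_eq [Fintype V] (G : SimpleGraph V) (c : G.ConnectedComponent) :
    c.supp.ncard = (Finset.univ.filter (fun v => G.connectedComponentMk v = c)).card := by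
  classical
  rw [Set.ncard_eq_toFinset_card']
  congr 1
  ext v
  simp [SimpleGraph.ConnectedComponent.mem_supp_iff]

open Classical in
lemma edgeSetType_sum [Fintype V] (A : Finset (Sym2 V)) :
    (edgeSetType A).sum = Fintype.card V := by
  classical
  have h : (edgeSetType A).sum
      = ∑ c ∈ ((Finset.univ : Finset V).image
        (fun v => (SimpleGraph.fromEdgeSet (↑A : Set (Sym2 V))).connectedComponentMk v)),
        c.supp.ncard := rfl
  rw [h]
  have := Finset.card_eq_sum_card_fiberwise
    (f := fun v => (SimpleGraph.fromEdgeSet (↑A : Set (Sym2 V))).connectedComponentMk v)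
    (s := (Finset.univ : Finset V))
    (t := (Finset.univ : Finset V).image
        (fun v => (SimpleGraph.fromEdgeSet (↑A : Set (Sym2 V))).connectedComponentMk v))
    (fun v _ => Finset.mem_image_of_mem _ (Finset.mem_univ v))
  rw [← Finset.card_univ, this]
  exact Finset.sum_congr rfl (fun c _ => (supp_ncard_eq _ c).symm ▸ rfl)

open Classical in
lemma edgeSetType_pos [Fintype V] (A : Finset (Sym2 V)) :
    ∀ m ∈ edgeSetType A, 0 < m := by
  classical
  intro m hm
  rw [edgeSetType] at hm
  obtain ⟨c, hc, rfl⟩ := Multiset.mem_map.mp hm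
  have hc' : c ∈ (Finset.univ : Finset V).image
      (fun v => (SimpleGraph.fromEdgeSet (↑A : Set (Sym2 V))).connectedComponentMk v) := hc
  obtain ⟨v, _, rfl⟩ := Finset.mem_image.mp hc'
  have hv : v ∈ ((SimpleGraph.fromEdgeSet (↑A : Set (Sym2 V))).connectedComponentMk v).supp :=
    by simp [SimpleGraph.ConnectedComponent.mem_supp_iff]
  exact Set.ncard_pos (Set.toFinite _) |>.mpr ⟨v, hv⟩

open Classical in
lemma edgeSetType_card [Fintype V] (A : Finset (Sym2 V)) :
    Multiset.card (edgeSetType A) = ((Finset.univ : Finset V).image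
      (fun v => (SimpleGraph.fromEdgeSet (↑A : Set (Sym2 V))).connectedComponentMk v)).card := by
  rw [edgeSetType, Multiset.card_map]
  rfl

lemma reach_eq_of_isolated {G : SimpleGraph V} {v w : V} (h : ∀ x, ¬ G.Adj v x)
    (hr : G.Reachable v w) : v = w := by
  obtain ⟨p⟩ := hr
  cases p with
  | nil => rfl
  | cons ha _ => exact absurd ha (h _)

lemma supp_eq_singleton_of_isolated {G : SimpleGraph V} {v : V} (h : ∀ x, ¬ G.Adj v x) :
    (G.connectedComponentMk v).supp = {v} := by
  ext w
  simp only [SimpleGraph.ConnectedComponent.mem_supp_iff, SimpleGraph.ConnectedComponent.eq,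
    Set.mem_singleton_iff]
  constructor
  · intro hr
    exact (reach_eq_of_isolated h hr.symm).symm
  · rintro rfl
    exact SimpleGraph.Reachable.refl w

open Classical in
lemma edgeSetType_count_one [Fintype V] (A : Finset (Sym2 V)) :
    Multiset.count 1 (edgeSetType A) =
      (Finset.univ.filter
        (fun v : V => ∀ w, ¬ (SimpleGraph.fromEdgeSet (↑A : Set (Sym2 V))).Adj v w)).card := by
  classical
  set G := SimpleGraph.fromEdgeSet (↑A : Set (Sym2 V)) with hG
  have h1 : Multiset.count 1 (edgeSetType A) =
      (((Finset.univ : Finset V).image (fun v => G.connectedComponentMk v)).filter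
        (fun c => c.supp.ncard = 1)).card := by
    rw [edgeSetType, Multiset.count_map]
    congr 1
    simp only [Finset.filter_val]
    congr 1
    ext c
    exact eq_comm
  rw [h1]
  symm
  refine Finset.card_bij (fun v _ => G.connectedComponentMk v) ?_ ?_ ?_
  · intro v hv
    simp only [Finset.mem_filter, Finset.mem_univ, true_and] at hv ⊢
    refine ⟨Finset.mem_image_of_mem _ (Finset.mem_univ v), ?_⟩
    rw [supp_eq_singleton_of_isolated hv, Set.ncard_singleton]
  · intro v hv v' hv' h
    simp only [Finset.mem_filter, Finset.mem_univ, true_and] at hv hv'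
    rw [SimpleGraph.ConnectedComponent.eq] at h
    exact reach_eq_of_isolated hv h
  · intro c hc
    simp only [Finset.mem_filter] at hc
    obtain ⟨hc1, hc2⟩ := hc
    obtain ⟨v, hv⟩ := Set.ncard_eq_one.mp hc2
    have hvc : G.connectedComponentMk v = c := by
      have : v ∈ c.supp := by rw [hv]; exact rfl
      exact (SimpleGraph.ConnectedComponent.mem_supp_iff _ _).mp this
    refine ⟨v, ?_, hvc⟩
    simp only [Finset.mem_filter, Finset.mem_univ, true_and]
    intro w hw
    have hwc : w ∈ c.supp := by
      rw [← hvc]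
      simp only [SimpleGraph.ConnectedComponent.mem_supp_iff, SimpleGraph.ConnectedComponent.eq]
      exact (SimpleGraph.Adj.reachable hw).symm
    rw [hv] at hwc
    exact G.ne_of_adj hw (Set.mem_singleton_iff.mp hwc).symm

lemma reachable_fromEdgeSet_insert {A : Set (Sym2 V)} {u v x y : V}
    (h : (SimpleGraph.fromEdgeSet (insert s(u,v) A)).Reachable x y) :
    (SimpleGraph.fromEdgeSet A).Reachable x y ∨
      ((SimpleGraph.fromEdgeSet A).Reachable x u ∧ (SimpleGraph.fromEdgeSet A).Reachable v y) ∨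
      ((SimpleGraph.fromEdgeSet A).Reachable x v ∧ (SimpleGraph.fromEdgeSet A).Reachable u y) := by
  obtain ⟨p⟩ := h
  induction p with
  | nil => exact Or.inl (SimpleGraph.Reachable.refl _)
  | @cons a b y ha p ih =>
    rw [SimpleGraph.fromEdgeSet_adj, Set.mem_insert_iff] at ha
    obtain ⟨hab | hab, hne⟩ := ha
    · rw [Sym2.eq_iff] at hab
      obtain ⟨rfl, rfl⟩ | ⟨rfl, rfl⟩ := hab
      · rcases ih with hr | ⟨h1, h2⟩ | ⟨h1, h2⟩
        · exact Or.inr (Or.inl ⟨SimpleGraph.Reachable.refl _, hr⟩)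
        · exact Or.inl (h1.symm.trans h2)
        · exact Or.inl h2
      · rcases ih with hr | ⟨h1, h2⟩ | ⟨h1, h2⟩
        · exact Or.inr (Or.inr ⟨SimpleGraph.Reachable.refl _, hr⟩)
        · exact Or.inl h2
        · exact Or.inl (h1.symm.trans h2)
    · have hG : (SimpleGraph.fromEdgeSet A).Adj a b := by
        rw [SimpleGraph.fromEdgeSet_adj]; exact ⟨hab, hne⟩
      rcases ih with hr | ⟨h1, h2⟩ | ⟨h1, h2⟩
      · exact Or.inl (hG.reachable.trans hr)
      · exact Or.inr (Or.inl ⟨hG.reachable.trans h1, h2⟩)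
      · exact Or.inr (Or.inr ⟨hG.reachable.trans h1, h2⟩)

lemma card_image_glue {α β : Type*} [DecidableEq α] [DecidableEq β] {s : Finset α} {f : α → β}
    {a b : α} (ha : a ∈ s) (hb : b ∈ s) (hab : a ≠ b) (hfab : f a = f b)
    (hinj : ∀ x ∈ s, ∀ y ∈ s, f x = f y → x = y ∨ (x = a ∧ y = b) ∨ (x = b ∧ y = a)) :
    (s.image f).card + 1 = s.card := by
  have h1 : s.image f = (s.erase a).image f := by
    apply subset_antisymm
    · intro z hz
      obtain ⟨x, hx, rfl⟩ := Finset.mem_image.mp hz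
      by_cases hxa : x = a
      · subst hxa
        exact Finset.mem_image.mpr ⟨b, Finset.mem_erase.mpr ⟨hab.symm, hb⟩, hfab.symm⟩
      · exact Finset.mem_image.mpr ⟨x, Finset.mem_erase.mpr ⟨hxa, hx⟩, rfl⟩
    · exact Finset.image_subset_image (Finset.erase_subset _ _)
  have h2 : Set.InjOn f (s.erase a) := by
    intro x hx y hy hxy
    simp only [Finset.coe_erase, Set.mem_diff, Finset.mem_coe, Set.mem_singleton_iff] at hx hy
    rcases hinj x hx.1 y hy.1 hxy with h | ⟨h, _⟩ | ⟨_, h⟩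
    · exact h
    · exact absurd h hx.2
    · exact absurd h hy.2
  rw [h1, Finset.card_image_of_injOn h2, Finset.card_erase_of_mem ha]
  have : 0 < s.card := Finset.card_pos.mpr ⟨a, ha⟩
  omega

open Classical in
lemma card_components_insert [Fintype V] {T : SimpleGraph V} (hac : T.IsAcyclic)
    {A : Finset (Sym2 V)} {u v : V} (hA : (↑A : Set (Sym2 V)) ⊆ T.edgeSet)
    (he : T.Adj u v) (heA : s(u,v) ∉ A) :
    (Finset.univ.image
        (SimpleGraph.fromEdgeSet (↑(insert s(u,v) A) : Set (Sym2 V))).connectedComponentMk).card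
      + 1
    = (Finset.univ.image
        (SimpleGraph.fromEdgeSet (↑A : Set (Sym2 V))).connectedComponentMk).card := by
  classical
  have hne : u ≠ v := he.ne
  set G := SimpleGraph.fromEdgeSet (↑A : Set (Sym2 V)) with hGdef
  have hcoe : (↑(insert s(u,v) A) : Set (Sym2 V)) = insert s(u,v) (↑A : Set (Sym2 V)) := by
    simp
  set G' := SimpleGraph.fromEdgeSet (↑(insert s(u,v) A) : Set (Sym2 V)) with hG'def
  have hG'eq : G' = SimpleGraph.fromEdgeSet (insert s(u,v) (↑A : Set (Sym2 V))) := by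
    rw [hG'def, hcoe]
  have hle : G ≤ G' := by
    rw [hG'eq]
    exact SimpleGraph.fromEdgeSet_mono (Set.subset_insert _ _)
  -- u and v are not reachable in G
  have hnr : ¬ G.Reachable u v := by
    intro hr
    have hbridge : T.IsBridge s(u,v) :=
      (SimpleGraph.isAcyclic_iff_forall_adj_isBridge.mp hac) he
    rw [SimpleGraph.isBridge_iff] at hbridge
    apply hbridge
    refine hr.mono ?_
    intro x y hxy
    rw [hGdef, SimpleGraph.fromEdgeSet_adj] at hxy
    rw [SimpleGraph.deleteEdges_adj]
    refine ⟨(T.mem_edgeSet).mp (hA hxy.1), fun hc => ?_⟩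
    rw [Set.mem_singleton_iff] at hc
    exact heA (hc ▸ hxy.1)
  -- reachability in G'
  have hreach' : ∀ x y : V, G'.Reachable x y →
      G.Reachable x y ∨ (G.Reachable x u ∧ G.Reachable v y) ∨
        (G.Reachable x v ∧ G.Reachable u y) := by
    intro x y hxy
    rw [hG'eq] at hxy
    exact reachable_fromEdgeSet_insert hxy
  have hadj' : G'.Adj u v := by
    rw [hG'eq, SimpleGraph.fromEdgeSet_adj]
    exact ⟨Set.mem_insert _ _, hne⟩
  -- the induced map on components
  set f : G.ConnectedComponent → G'.ConnectedComponent :=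
    SimpleGraph.ConnectedComponent.map (SimpleGraph.Hom.ofLE hle) with hfdef
  have hfm : ∀ x : V, f (G.connectedComponentMk x) = G'.connectedComponentMk x := by
    intro x
    rw [hfdef, SimpleGraph.ConnectedComponent.map_mk]
    rfl
  have himg : Finset.univ.image G'.connectedComponentMk
      = (Finset.univ.image G.connectedComponentMk).image f := by
    rw [Finset.image_image]
    apply Finset.image_congr
    intro x _
    exact (hfm x).symm
  rw [himg]
  refine card_image_glue (a := G.connectedComponentMk u) (b := G.connectedComponentMk v)
    (Finset.mem_image_of_mem _ (Finset.mem_univ u))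
    (Finset.mem_image_of_mem _ (Finset.mem_univ v)) ?_ ?_ ?_
  · intro hc
    exact hnr (SimpleGraph.ConnectedComponent.eq.mp hc)
  · rw [hfm, hfm]
    exact SimpleGraph.ConnectedComponent.eq.mpr hadj'.reachable
  · intro x hx y hy hxy
    obtain ⟨p, _, rfl⟩ := Finset.mem_image.mp hx
    obtain ⟨q, _, rfl⟩ := Finset.mem_image.mp hy
    rw [hfm, hfm] at hxy
    have hr : G'.Reachable p q := SimpleGraph.ConnectedComponent.eq.mp hxy
    rcases hreach' p q hr with h | ⟨h1, h2⟩ | ⟨h1, h2⟩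
    · exact Or.inl (SimpleGraph.ConnectedComponent.eq.mpr h)
    · exact Or.inr (Or.inl ⟨SimpleGraph.ConnectedComponent.eq.mpr h1,
        SimpleGraph.ConnectedComponent.eq.mpr h2.symm⟩)
    · exact Or.inr (Or.inr ⟨SimpleGraph.ConnectedComponent.eq.mpr h1,
        SimpleGraph.ConnectedComponent.eq.mpr h2.symm⟩)

open Classical in
lemma card_components_add_card [Fintype V] {T : SimpleGraph V} (hac : T.IsAcyclic)
    (A : Finset (Sym2 V)) (hsub : (↑A : Set (Sym2 V)) ⊆ T.edgeSet) :
    (Finset.univ.image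
        (SimpleGraph.fromEdgeSet (↑A : Set (Sym2 V))).connectedComponentMk).card + A.card
      = Fintype.card V := by
  classical
  induction A using Finset.induction_on with
  | empty =>
    have hinj : Function.Injective
        (SimpleGraph.fromEdgeSet (↑(∅ : Finset (Sym2 V)) : Set (Sym2 V))).connectedComponentMk := by
      intro x y hxy
      have := SimpleGraph.ConnectedComponent.eq.mp hxy
      rw [Finset.coe_empty, SimpleGraph.fromEdgeSet_empty] at this
      exact SimpleGraph.reachable_bot.mp this
    rw [Finset.card_empty, Nat.add_zero, Finset.card_image_of_injective _ hinj, Finset.card_univ]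
  | @insert e A he ih =>
    revert he hsub
    induction e using Sym2.ind with
    | _ u v =>
      intro he hsub
      have hA : (↑A : Set (Sym2 V)) ⊆ T.edgeSet := by
        refine subset_trans ?_ hsub
        simp
      have he' : T.Adj u v := (T.mem_edgeSet).mp (hsub (by simp))
      have hstep := card_components_insert hac hA he' he
      have hih := ih hA
      rw [Finset.card_insert_of_notMem he]
      omega

open Classical in
lemma count_isolated [Fintype V] {T : SimpleGraph V} [DecidableRel T.Adj] (hT : T.IsTree) (v : V) (k : ℕ) :
    ((Finset.univ : Finset (Sym2 V)).powerset.filter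
      (fun A : Finset (Sym2 V) => (↑A : Set (Sym2 V)) ⊆ T.edgeSet ∧ A.card = k ∧
        ∀ w, ¬ (SimpleGraph.fromEdgeSet (↑A : Set (Sym2 V))).Adj v w)).card
    = (Fintype.card V - 1 - T.degree v).choose k := by
  classical
  have hsetEq : (Finset.univ : Finset (Sym2 V)).powerset.filter
      (fun A : Finset (Sym2 V) => (↑A : Set (Sym2 V)) ⊆ T.edgeSet ∧ A.card = k ∧
        ∀ w, ¬ (SimpleGraph.fromEdgeSet (↑A : Set (Sym2 V))).Adj v w)
      = Finset.powersetCard k (T.edgeFinset \ T.incidenceFinset v) := by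
    ext A
    simp only [Finset.mem_filter, Finset.mem_powerset, Finset.mem_powersetCard]
    constructor
    · rintro ⟨-, hsub, hcard, hiso⟩
      refine ⟨fun e heA => ?_, hcard⟩
      rw [Finset.mem_sdiff]
      have heE : e ∈ T.edgeSet := hsub heA
      refine ⟨SimpleGraph.mem_edgeFinset.mpr heE, fun hinc => ?_⟩
      rw [SimpleGraph.mem_incidenceFinset] at hinc
      obtain ⟨-, hve⟩ := hinc
      obtain ⟨w, rfl⟩ := Sym2.mem_iff_exists.mp hve
      have hvw : v ≠ w := by
        intro hc
        exact (T.not_isDiag_of_mem_edgeSet heE) (by simp [hc])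
      exact hiso w ((SimpleGraph.fromEdgeSet_adj _).mpr ⟨Finset.mem_coe.mpr heA, hvw⟩)
    · rintro ⟨hsub, hcard⟩
      refine ⟨Finset.subset_univ _, fun e heA => ?_, hcard, fun w hadj => ?_⟩
      · have := hsub heA
        rw [Finset.mem_sdiff] at this
        exact SimpleGraph.mem_edgeFinset.mp this.1
      · rw [SimpleGraph.fromEdgeSet_adj _] at hadj
        obtain ⟨hmem, hne⟩ := hadj
        have := hsub (Finset.mem_coe.mp hmem)
        rw [Finset.mem_sdiff] at this
        apply this.2
        rw [SimpleGraph.mem_incidenceFinset]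
        exact ⟨SimpleGraph.mem_edgeFinset.mp this.1, Sym2.mem_mk_left v w⟩
  rw [hsetEq, Finset.card_powersetCard]
  congr 1
  rw [Finset.card_sdiff_of_subset]
  · rw [SimpleGraph.card_incidenceFinset_eq_degree]
    have := hT.card_edgeFinset
    omega
  · intro e he
    rw [SimpleGraph.mem_incidenceFinset] at he
    exact SimpleGraph.mem_edgeFinset.mpr he.1

open Classical in
lemma sum_F_eq_sum_choose [Fintype V] {T : SimpleGraph V} [DecidableRel T.Adj] (hT : T.IsTree) (k : ℕ) :
    ∑ A ∈ ((Finset.univ : Finset (Sym2 V)).powerset.filter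
        (fun A : Finset (Sym2 V) => (↑A : Set (Sym2 V)) ⊆ T.edgeSet)),
      (if Multiset.card (edgeSetType A) + k = Fintype.card V
        then Multiset.count 1 (edgeSetType A) else 0)
    = ∑ v : V, (Fintype.card V - 1 - T.degree v).choose k := by
  classical
  have step1 : ∑ A ∈ ((Finset.univ : Finset (Sym2 V)).powerset.filter
        (fun A : Finset (Sym2 V) => (↑A : Set (Sym2 V)) ⊆ T.edgeSet)),
      (if Multiset.card (edgeSetType A) + k = Fintype.card V
        then Multiset.count 1 (edgeSetType A) else 0)
      = ∑ A ∈ ((Finset.univ : Finset (Sym2 V)).powerset.filter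
        (fun A : Finset (Sym2 V) => (↑A : Set (Sym2 V)) ⊆ T.edgeSet)),
      (if A.card = k then Multiset.count 1 (edgeSetType A) else 0) := by
    refine Finset.sum_congr rfl (fun A hA => ?_)
    rw [Finset.mem_filter] at hA
    have hcomp := card_components_add_card hT.IsAcyclic A hA.2
    have hcard : Multiset.card (edgeSetType A) + A.card = Fintype.card V := by
      rw [edgeSetType_card]; exact hcomp
    by_cases hk : A.card = k
    · rw [if_pos (by omega), if_pos hk]
    · rw [if_neg (by omega), if_neg hk]
  rw [step1, ← Finset.sum_filter]
  have step3 : ∀ A : Finset (Sym2 V), Multiset.count 1 (edgeSetType A)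
      = ∑ v : V, (if ∀ w, ¬ (SimpleGraph.fromEdgeSet (↑A : Set (Sym2 V))).Adj v w
          then 1 else 0) := by
    intro A
    rw [edgeSetType_count_one, Finset.card_filter]
  simp_rw [step3]
  rw [Finset.sum_comm]
  refine Finset.sum_congr rfl (fun v _ => ?_)
  rw [← Finset.card_filter]
  rw [Finset.filter_filter, Finset.filter_filter]
  exact count_isolated hT v k

open Classical in
lemma sum_eq_sum_NCoeff [Fintype V] (G : SimpleGraph V) (F : Multiset ℕ → ℕ)
    (Lam : Finset (Multiset ℕ))
    (hLam : (((Finset.univ : Finset (Sym2 V)).powerset.filter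
      (fun A : Finset (Sym2 V) => (↑A : Set (Sym2 V)) ⊆ G.edgeSet)).image edgeSetType) ⊆ Lam) :
    ∑ A ∈ ((Finset.univ : Finset (Sym2 V)).powerset.filter
        (fun A : Finset (Sym2 V) => (↑A : Set (Sym2 V)) ⊆ G.edgeSet)), F (edgeSetType A)
      = ∑ lam ∈ Lam, NCoeff G lam * F lam := by
  classical
  rw [← Finset.sum_fiberwise_of_maps_to (g := edgeSetType)
    (fun A hA => hLam (Finset.mem_image_of_mem _ hA)) (fun A => F (edgeSetType A))]
  refine Finset.sum_congr rfl (fun lam _ => ?_)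
  have h1 : ∀ A ∈ (((Finset.univ : Finset (Sym2 V)).powerset.filter
      (fun A : Finset (Sym2 V) => (↑A : Set (Sym2 V)) ⊆ G.edgeSet)).filter
        (fun A => edgeSetType A = lam)), F (edgeSetType A) = F lam := by
    intro A hA
    rw [(Finset.mem_filter.mp hA).2]
  rw [Finset.sum_congr rfl h1, Finset.sum_const, smul_eq_mul]
  congr 1
  rw [NCoeff]
  congr 1
  ext A
  simp only [Finset.mem_filter, Finset.mem_powerset, Finset.subset_univ, true_and, and_assoc]

lemma sum_degree_fiber [Fintype V] (G : SimpleGraph V) [DecidableRel G.Adj] {n : ℕ}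
    (hn : Fintype.card V = n) (f : ℕ → ℕ) :
    ∑ v : V, f (G.degree v)
      = ∑ i ∈ Finset.range n, (Finset.univ.filter (fun v => G.degree v = i)).card * f i := by
  classical
  have hmaps : ∀ v ∈ (Finset.univ : Finset V), G.degree v ∈ Finset.range n := by
    intro v _
    rw [Finset.mem_range, ← hn]
    exact G.degree_lt_card_verts v
  have hfib := Finset.sum_fiberwise_of_maps_to hmaps (fun v => f (G.degree v))
  rw [← hfib]
  refine Finset.sum_congr rfl (fun i _ => ?_)
  have h1 : ∀ v ∈ Finset.univ.filter (fun v => G.degree v = i), f (G.degree v) = f i := by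
    intro v hv
    rw [(Finset.mem_filter.mp hv).2]
  rw [Finset.sum_congr rfl h1, Finset.sum_const, smul_eq_mul]

lemma choose_inversion {n : ℕ} (d d' : ℕ → ℕ)
    (h : ∀ k, ∑ i ∈ Finset.range n, d i * (n - 1 - i).choose k
      = ∑ i ∈ Finset.range n, d' i * (n - 1 - i).choose k) :
    ∀ j, j < n → d j = d' j := by
  intro j
  induction j using Nat.strong_induction_on with
  | _ j ih =>
    intro hj
    have hkey := h (n - 1 - j)
    have htrunc : ∀ e : ℕ → ℕ, ∑ i ∈ Finset.range n, e i * (n - 1 - i).choose (n - 1 - j)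
        = ∑ i ∈ Finset.range (j + 1), e i * (n - 1 - i).choose (n - 1 - j) := by
      intro e
      refine (Finset.sum_subset (Finset.range_subset_range.mpr hj) ?_).symm
      intro i hin hiout
      rw [Finset.mem_range] at hin
      rw [Finset.mem_range, not_lt] at hiout
      have : n - 1 - i < n - 1 - j := by omega
      rw [Nat.choose_eq_zero_of_lt this, Nat.mul_zero]
    rw [htrunc d, htrunc d'] at hkey
    rw [Finset.sum_range_succ, Finset.sum_range_succ] at hkey
    have hsame : ∑ i ∈ Finset.range j, d i * (n - 1 - i).choose (n - 1 - j)
        = ∑ i ∈ Finset.range j, d' i * (n - 1 - i).choose (n - 1 - j) := by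
      refine Finset.sum_congr rfl (fun i hi => ?_)
      rw [Finset.mem_range] at hi
      rw [ih i hi (lt_trans hi hj)]
    rw [hsame, Nat.choose_self] at hkey
    omega

/-- Let `T` and `U` be trees, each with `n` vertices, with `N_λ(T) = N_λ(U)` for every
partition `λ` of `n` (equivalently, `X_T = X_U`).  Then `T` and `U` have the same degree
sequence: for every `j`, they have the same number of vertices of degree `j`. -/
theorem stmt_12 [Fintype V] [Fintype W] (T : SimpleGraph V) (U : SimpleGraph W)
    [DecidableRel T.Adj] [DecidableRel U.Adj]
    (hT : T.IsTree) (hU : U.IsTree) (n : ℕ)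
    (hVn : Fintype.card V = n) (hWn : Fintype.card W = n)
    (hN : ∀ lam : Multiset ℕ, lam.sum = n → (∀ m ∈ lam, 0 < m) →
      NCoeff T lam = NCoeff U lam) :
    ∀ j : ℕ, (Finset.univ.filter (fun v : V => T.degree v = j)).card =
      (Finset.univ.filter (fun w : W => U.degree w = j)).card := by
  classical
  have hVW : ∀ k : ℕ, (∑ v : V, (n - 1 - T.degree v).choose k)
      = ∑ w : W, (n - 1 - U.degree w).choose k := by
    intro k
    have hT1 : ∑ A ∈ ((Finset.univ : Finset (Sym2 V)).powerset.filter
        (fun A : Finset (Sym2 V) => (↑A : Set (Sym2 V)) ⊆ T.edgeSet)),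
        (if Multiset.card (edgeSetType A) + k = n
          then Multiset.count 1 (edgeSetType A) else 0)
        = ∑ v : V, (n - 1 - T.degree v).choose k := by
      have := sum_F_eq_sum_choose hT k
      rw [hVn] at this
      exact this
    have hU1 : ∑ A ∈ ((Finset.univ : Finset (Sym2 W)).powerset.filter
        (fun A : Finset (Sym2 W) => (↑A : Set (Sym2 W)) ⊆ U.edgeSet)),
        (if Multiset.card (edgeSetType A) + k = n
          then Multiset.count 1 (edgeSetType A) else 0)
        = ∑ w : W, (n - 1 - U.degree w).choose k := by
      have := sum_F_eq_sum_choose hU k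
      rw [hWn] at this
      exact this
    set F : Multiset ℕ → ℕ :=
      fun lam => if Multiset.card lam + k = n then Multiset.count 1 lam else 0 with hF
    set LamT := (((Finset.univ : Finset (Sym2 V)).powerset.filter
      (fun A : Finset (Sym2 V) => (↑A : Set (Sym2 V)) ⊆ T.edgeSet)).image edgeSetType) with hLT
    set LamU := (((Finset.univ : Finset (Sym2 W)).powerset.filter
      (fun A : Finset (Sym2 W) => (↑A : Set (Sym2 W)) ⊆ U.edgeSet)).image edgeSetType) with hLU
    set Lam := LamT ∪ LamU with hLam
    have hT2 := sum_eq_sum_NCoeff T F Lam (hLam ▸ Finset.subset_union_left)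
    have hU2 := sum_eq_sum_NCoeff U F Lam (hLam ▸ Finset.subset_union_right)
    have hmid : ∑ lam ∈ Lam, NCoeff T lam * F lam = ∑ lam ∈ Lam, NCoeff U lam * F lam := by
      refine Finset.sum_congr rfl (fun lam hlam => ?_)
      have hprops : lam.sum = n ∧ ∀ m ∈ lam, 0 < m := by
        rcases Finset.mem_union.mp hlam with h | h
        · obtain ⟨A, _, rfl⟩ := Finset.mem_image.mp h
          exact ⟨by rw [edgeSetType_sum, hVn], edgeSetType_pos A⟩
        · obtain ⟨A, _, rfl⟩ := Finset.mem_image.mp h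
          exact ⟨by rw [edgeSetType_sum, hWn], edgeSetType_pos A⟩
      rw [hN lam hprops.1 hprops.2]
    calc ∑ v : V, (n - 1 - T.degree v).choose k
        = ∑ A ∈ ((Finset.univ : Finset (Sym2 V)).powerset.filter
            (fun A : Finset (Sym2 V) => (↑A : Set (Sym2 V)) ⊆ T.edgeSet)), F (edgeSetType A) :=
          hT1.symm
      _ = ∑ lam ∈ Lam, NCoeff T lam * F lam := hT2
      _ = ∑ lam ∈ Lam, NCoeff U lam * F lam := hmid
      _ = ∑ A ∈ ((Finset.univ : Finset (Sym2 W)).powerset.filter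
            (fun A : Finset (Sym2 W) => (↑A : Set (Sym2 W)) ⊆ U.edgeSet)), F (edgeSetType A) :=
          hU2.symm
      _ = ∑ w : W, (n - 1 - U.degree w).choose k := hU1
  have hdeg : ∀ k : ℕ,
      ∑ i ∈ Finset.range n,
        (Finset.univ.filter (fun v : V => T.degree v = i)).card * (n - 1 - i).choose k
      = ∑ i ∈ Finset.range n,
        (Finset.univ.filter (fun w : W => U.degree w = i)).card * (n - 1 - i).choose k := by
    intro k
    rw [← sum_degree_fiber T hVn (fun i => (n - 1 - i).choose k),
      ← sum_degree_fiber U hWn (fun i => (n - 1 - i).choose k)]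
    exact hVW k
  intro j
  by_cases hj : j < n
  · exact choose_inversion _ _ hdeg j hj
  · have hTe : (Finset.univ.filter (fun v : V => T.degree v = j)) = ∅ := by
      refine Finset.filter_eq_empty_iff.mpr (fun v _ => ?_)
      have := T.degree_lt_card_verts v
      omega
    have hUe : (Finset.univ.filter (fun w : W => U.degree w = j)) = ∅ := by
      refine Finset.filter_eq_empty_iff.mpr (fun w _ => ?_)
      have := U.degree_lt_card_verts w
      omega
    rw [hTe, hUe]
    rfl
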